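/- Let p be prime and i_1,…,i_ℓ positive integers with Σ i_j = p. The rational number p!/[(∏_j i_j!)·P_𝔦], where P_𝔦 is the number of permutations of {1,…,ℓ} fixing the vector (i_1,…,i_ℓ), is an integer, and it is nonzero modulo p if and only if either ℓ = 1 (so i_1 = p) or ℓ = p with all i_j = 1. -/

import Mathlib

open scoped Classical

/-- For `p` prime and positive integers `i₁,…,i_ℓ` summing to `p`, the rational number
`p! / ((∏ⱼ iⱼ!) · P_𝔦)`, where `P_𝔦` is the number of permutations of `{1,…,ℓ}` fixing
the vector `(i₁,…,i_ℓ)`, is an integer, and it is nonzero mod `p` iff `ℓ = 1` (so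
`i₁ = p`) or `ℓ = p` with all `iⱼ = 1`. -/
theorem multinomial_coeff_mod_p (p ℓ : ℕ) (hp : p.Prime) (i : Fin ℓ → ℕ)
    (hi : ∀ j, 0 < i j) (hsum : ∑ j, i j = p) :
    ∃ m : ℕ,
      ((p.factorial : ℚ) /
          ((∏ j, (Nat.factorial (i j) : ℚ)) *
            ((Finset.univ.filter (fun σ : Equiv.Perm (Fin ℓ) => ∀ j, i (σ j) = i j)).card : ℚ))
        = (m : ℚ)) ∧
      (¬ (p ∣ m) ↔ (ℓ = 1 ∨ (ℓ = p ∧ ∀ j, i j = 1))) := by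
  classical
  set Pc := (Finset.univ.filter (fun σ : Equiv.Perm (Fin ℓ) => ∀ j, i (σ j) = i j)).card with hPcdef
  set A := ∏ j, Nat.factorial (i j) with hA
  set M : Multiset ℕ := Multiset.map i Finset.univ.val with hMdef
  have hMtoF : M.toFinset = Finset.univ.image i := by
    ext k; simp [hMdef, Finset.mem_image, List.mem_ofFn]
  have h0 : (0:ℕ) ∉ M.toFinset := by
    rw [hMtoF]
    simp only [Finset.mem_image, Finset.mem_univ, true_and, not_exists]
    intro j h
    exact (hi j).ne' h
  have hcount : ∀ k, M.count k = Fintype.card {j // i j = k} := by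
    intro k
    rw [Fintype.card_subtype, hMdef, Multiset.count_map]
    rw [Finset.card]
    congr 1
    rw [Finset.filter_val]
    apply Multiset.filter_congr
    intro j _
    exact eq_comm
  have hPstab : Pc = ∏ k ∈ Finset.univ.image i, (Fintype.card {j // i j = k}).factorial := by
    rw [← DomMulAct.stabilizer_card' i, Fintype.card_subtype, hPcdef]
    congr 1
    apply Finset.filter_congr
    intro σ _
    simp [funext_iff]
  have hApos : 0 < A := Finset.prod_pos fun j _ => Nat.factorial_pos _
  have hPcpos : 0 < Pc := by
    rw [hPcdef]
    apply Finset.card_pos.mpr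
    exact ⟨1, by simp⟩
  -- main numerical identity
  have hNat : M.bell * A * Pc = p.factorial := by
    have key := Multiset.bell_mul_eq M
    rw [Finset.erase_eq_of_notMem h0, hMtoF] at key
    have e1 : (M.map fun j => j.factorial).prod = A := by
      rw [hMdef, Multiset.map_map, hA, Finset.prod_eq_multiset_prod]
      rfl
    have e2 : M.sum = p := by
      rw [hMdef, ← hsum, Finset.sum_eq_multiset_sum]
    have e3 : ∏ j ∈ Finset.univ.image i, (M.count j).factorial = Pc := by
      rw [hPstab]
      exact Finset.prod_congr rfl fun k _ => by rw [hcount]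
    rw [e1, e2, e3] at key
    exact key
  refine ⟨M.bell, ?_, ?_⟩
  · rw [div_eq_iff, ← Nat.cast_prod]
    · rw [← hA, ← hNat]
      push_cast
      ring
    · have : (0:ℚ) < (∏ j, (Nat.factorial (i j) : ℚ)) * (Pc : ℚ) := by
        rw [← Nat.cast_prod, ← hA]
        positivity
      exact this.ne'
  constructor
  · intro hnd
    by_contra hcon
    push_neg at hcon
    obtain ⟨h1, h2⟩ := hcon
    have hl0 : 0 < ℓ := by
      rcases Nat.eq_zero_or_pos ℓ with h | h
      · subst h; simp at hsum; exact absurd hsum.symm hp.pos.ne'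
      · exact h
    have hle : ℓ ≤ p := by
      calc ℓ = ∑ _j : Fin ℓ, 1 := by simp
        _ ≤ ∑ j, i j := Finset.sum_le_sum fun j _ => hi j
        _ = p := hsum
    have hall : ℓ = p → ∀ j, i j = 1 := by
      intro hep
      by_contra hne
      push_neg at hne
      obtain ⟨j, hj⟩ := hne
      have hlt : (∑ _j : Fin ℓ, 1) < ∑ j, i j :=
        Finset.sum_lt_sum (fun j _ => hi j) ⟨j, Finset.mem_univ j, lt_of_le_of_ne (hi j) (Ne.symm hj)⟩
      simp [hsum, hep] at hlt
    have hlp : ℓ < p := by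
      rcases eq_or_lt_of_le hle with h | h
      · obtain ⟨j, hj⟩ := h2 h
        exact absurd (hall h j) hj
      · exact h
    have h2l : 2 ≤ ℓ := lt_of_le_of_ne hl0 (Ne.symm h1)
    have hij : ∀ j, i j < p := by
      intro j
      obtain ⟨j', hj'⟩ := Fintype.exists_ne_of_one_lt_card (by rw [Fintype.card_fin]; omega) j
      have hsplit := Finset.add_sum_erase Finset.univ i (Finset.mem_univ j)
      have hle' : i j' ≤ ∑ x ∈ Finset.univ.erase j, i x :=
        Finset.single_le_sum (fun _ _ => Nat.zero_le _)
          (Finset.mem_erase.mpr ⟨hj', Finset.mem_univ _⟩)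
      have hS : 0 < ∑ x ∈ Finset.univ.erase j, i x := lt_of_lt_of_le (hi j') hle'
      calc i j < i j + ∑ x ∈ Finset.univ.erase j, i x := Nat.lt_add_of_pos_right hS
        _ = p := by rw [hsplit, hsum]
    have hpA : ¬ p ∣ A := by
      intro hd
      rw [hA, Prime.dvd_finset_prod_iff hp.prime] at hd
      obtain ⟨j, _, hj⟩ := hd
      rw [Nat.Prime.dvd_factorial hp] at hj
      exact absurd hj (not_le.mpr (hij j))
    have hpP : ¬ p ∣ Pc := by
      intro hd
      rw [hPstab, Prime.dvd_finset_prod_iff hp.prime] at hd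
      obtain ⟨k, _, hk⟩ := hd
      rw [Nat.Prime.dvd_factorial hp] at hk
      have : Fintype.card {j // i j = k} ≤ ℓ := by
        simpa using Fintype.card_subtype_le (fun j => i j = k)
      exact lt_irrefl p (lt_of_le_of_lt (hk.trans this) hlp)
    have hdp : p ∣ M.bell * A * Pc := by
      rw [hNat]; exact Nat.dvd_factorial hp.pos le_rfl
    rcases (hp.dvd_mul.mp hdp) with h | h
    · rcases (hp.dvd_mul.mp h) with h' | h'
      · exact hnd h'
      · exact hpA h'
    · exact hpP h
  · rintro (h1 | ⟨hep, hone⟩)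
    · subst h1
      have hi0 : i 0 = p := by simpa using hsum
      have hA1 : A = p.factorial := by rw [hA]; simp [hi0]
      have hm1 : M.bell = 1 := by
        have := hNat
        rw [hA1] at this
        have h' : (M.bell * Pc) * p.factorial = 1 * p.factorial := by ring_nf; linarith [this]
        have := Nat.eq_of_mul_eq_mul_right (Nat.factorial_pos p) h'
        exact Nat.dvd_one.mp ⟨Pc, this.symm⟩
      rw [hm1]
      exact Nat.Prime.not_dvd_one hp
    · have hA1 : A = 1 := by
        rw [hA]
        simp [hone]
      have hPc1 : Pc = p.factorial := by
        have hfilt : (Finset.univ.filter (fun σ : Equiv.Perm (Fin ℓ) => ∀ j, i (σ j) = i j))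
            = Finset.univ := Finset.filter_true_of_mem fun σ _ j => by rw [hone, hone]
        rw [hPcdef, hfilt, Finset.card_univ, Fintype.card_perm, Fintype.card_fin, hep]
      have hm1 : M.bell = 1 := by
        have := hNat
        rw [hA1, hPc1, mul_one] at this
        exact Nat.eq_of_mul_eq_mul_right (Nat.factorial_pos p) (by linarith [this])
      rw [hm1]
      exact Nat.Prime.not_dvd_one hp
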